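/- arXiv:1405.4317 — 2 statements merged into one kernel-verified Lean document; each statement's English description precedes it below -/
import Mathlib

section
/- A generic Hankel matrix of size v×w (v ≥ w ≥ 1) with (i,j) entry X_{i+j-1} in the polynomial ring k[X_1,...,X_{v+w-1}] is 1-generic: for every nonzero a ∈ k^v and nonzero b ∈ k^w, the linear form aᵀ H b is nonzero. -/
open MvPolynomial

noncomputable section

/-- The height of an ideal: infimum of heights of primes containing it. -/
def idealHeight {R : Type*} [CommRing R] (I : Ideal R) : ℕ∞ :=
  ⨅ (P : PrimeSpectrum R) (_ : I ≤ P.asIdeal), Order.height P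

/-- The ideal generated by the `t × t` minors of a matrix. -/
def minorsIdeal {R : Type*} [CommRing R] {v w : ℕ} (M : Matrix (Fin v) (Fin w) R)
    (t : ℕ) : Ideal R :=
  Ideal.span { d | ∃ (ri : Fin t → Fin v) (ci : Fin t → Fin w),
    Function.Injective ri ∧ Function.Injective ci ∧ d = (M.submatrix ri ci).det }

/-- The increasing enumeration of `{0, ..., v-1} \ {p}`. -/
def deleteRow {v : ℕ} (p : ℕ) (i : Fin (v - 1)) : Fin v :=
  if h : i.1 < p then ⟨i.1, by omega⟩ else ⟨i.1 + 1, by omega⟩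

/-- The signed maximal minors of a `v × (v-1)` matrix. -/
def signedMinors {R : Type*} [CommRing R] {v : ℕ} (M : Matrix (Fin v) (Fin (v - 1)) R) :
    Fin v → R :=
  fun i => (-1 : R) ^ i.1 * (M.submatrix (deleteRow i.1) id).det

/-- A matrix of linear forms is `1`-generic if every "bilinear combination" of its entries
with nonzero coefficient vectors over `k` is nonzero. -/
def IsOneGeneric {k : Type*} [Field k] {σ : Type*} {v w : ℕ}
    (M : Matrix (Fin v) (Fin w) (MvPolynomial σ k)) : Prop :=
  ∀ a : Fin v → k, a ≠ 0 → ∀ b : Fin w → k, b ≠ 0 →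
    (∑ i, ∑ j, C (a i) * M i j * C (b j)) ≠ 0

/-- The kernel of the presentation `R[T_1,...,T_p] → R[It]`, `T_i ↦ g_i t`, of the Rees
algebra of the ideal generated by `g`. -/
def presentationKer {R : Type*} [CommRing R] {p : ℕ} (g : Fin p → R) :
    Ideal (MvPolynomial (Fin p) R) :=
  RingHom.ker ((MvPolynomial.aeval (R := R)
    (fun i => Polynomial.C (g i) * Polynomial.X)).toRingHom)

/-- The ideal generated by `g` is of linear type (w.r.t. the generators `g`):
the defining ideal of its Rees algebra is generated in degree one, which amounts to
`Sym(I) → R[It]` being an isomorphism. -/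
def IsLinearTypeGen {R : Type*} [CommRing R] {p : ℕ} (g : Fin p → R) : Prop :=
  presentationKer g =
    Ideal.span { q | q ∈ presentationKer g ∧ q.IsHomogeneous 1 }

/-- The `s`-th symbolic power of `I`, as the contraction of `U⁻¹Iˢ` where `U` is the
complement of the union of the associated primes of `R/I`. -/
def symbolicPower {R : Type*} [CommRing R] (I : Ideal R) (s : ℕ) : Set R :=
  { x | ∃ u : R, (∀ P ∈ associatedPrimes R (R ⧸ I), u ∉ P) ∧ u * x ∈ I ^ s }

/-- A (Noetherian) local ring is Cohen–Macaulay if it admits a regular sequence in the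
maximal ideal whose length is the Krull dimension. -/
def IsCMLocalRing (A : Type*) [CommRing A] [IsLocalRing A] : Prop :=
  ∃ rs : List A, (∀ x ∈ rs, x ∈ IsLocalRing.maximalIdeal A) ∧
    RingTheory.Sequence.IsRegular A rs ∧ (rs.length : WithBot ℕ∞) = ringKrullDim A

/-- A ring is Cohen–Macaulay if all its localizations at primes are Cohen–Macaulay. -/
def IsCMRing (A : Type*) [CommRing A] : Prop :=
  ∀ (P : Ideal A) [P.IsPrime], IsCMLocalRing (Localization.AtPrime P)

/-- A Noetherian local ring is regular if its maximal ideal is generated by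
(Krull dimension)-many elements. -/
def IsRegularLocalRing' (A : Type*) [CommRing A] [IsLocalRing A] : Prop :=
  IsNoetherianRing A ∧ ∃ s : Finset A,
    Ideal.span (s : Set A) = IsLocalRing.maximalIdeal A ∧
    (s.card : WithBot ℕ∞) = ringKrullDim A

/-- The forms `g : Fin n → k[X_1,...,X_n]` define a Cremona (birational) map of `ℙ^{n-1}`:
there are forms `f` of a common degree and nonzero "inversion factors" `D`, `D'` with
`f_i(g) = X_i · D` and `g_i(f) = X_i · D'`. -/
def IsCremona {k : Type*} [Field k] {n : ℕ} (g : Fin n → MvPolynomial (Fin n) k) : Prop :=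
  ∃ (d : ℕ) (f : Fin n → MvPolynomial (Fin n) k) (D D' : MvPolynomial (Fin n) k),
    (∀ i, (f i).IsHomogeneous d) ∧ D ≠ 0 ∧ D' ≠ 0 ∧
    (∀ i, MvPolynomial.aeval g (f i) = X i * D) ∧
    (∀ i, MvPolynomial.aeval f (g i) = X i * D')

/-- The analytic spread of `I` at the prime `P`: the dimension of the special fiber
of the Rees algebra of `I_P` over `R_P`. -/
def analyticSpreadAt {R : Type*} [CommRing R] (I : Ideal R) (P : Ideal R) [P.IsPrime] :
    WithBot ℕ∞ :=
  ringKrullDim ((reesAlgebra (I.map (algebraMap R (Localization.AtPrime P)))) ⧸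
    (Ideal.span ((algebraMap (Localization.AtPrime P)
        (reesAlgebra (I.map (algebraMap R (Localization.AtPrime P))))) ''
      ((IsLocalRing.maximalIdeal (Localization.AtPrime P) : Ideal _) : Set _))))

/-- The `m × (m-1)` `r`-leap catalecticant matrix in `(m-1)(r+1)` variables. -/
def catMatrix (k : Type*) [CommSemiring k] (m r : ℕ) :
    Matrix (Fin m) (Fin (m - 1)) (MvPolynomial (Fin ((m - 1) * (r + 1))) k) :=
  fun i j => X ⟨i.1 * r + j.1, by
    have h1 := i.isLt; have h2 := j.isLt
    have h3 : i.1 ≤ m - 1 := by omega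
    calc i.1 * r + j.1 < i.1 * r + (m - 1) := by omega
      _ ≤ (m - 1) * r + (m - 1) := Nat.add_le_add_right (Nat.mul_le_mul_right r h3) _
      _ = (m - 1) * (r + 1) := by ring⟩

/-- The `v × w` `r`-leap catalecticant matrix in `(v-1)r + w` variables. -/
def catMatrixVW (k : Type*) [CommSemiring k] (v w r : ℕ) :
    Matrix (Fin v) (Fin w) (MvPolynomial (Fin ((v - 1) * r + w)) k) :=
  fun i j => X ⟨i.1 * r + j.1, by
    have h1 := i.isLt; have h2 := j.isLt
    have h3 : i.1 ≤ v - 1 := by omega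
    calc i.1 * r + j.1 ≤ (v - 1) * r + j.1 :=
          Nat.add_le_add_right (Nat.mul_le_mul_right r h3) _
      _ < (v - 1) * r + w := by omega⟩

/-- The generic `v × w` Hankel matrix in `v + w - 1` variables. -/
def hankelMatrix (k : Type*) [CommSemiring k] (v w : ℕ) :
    Matrix (Fin v) (Fin w) (MvPolynomial (Fin (v + w - 1)) k) :=
  fun i j => X ⟨i.1 + j.1, by omega⟩

/-- The `m × (m-1)` sub-Hankel matrix in `n` variables: the generic Hankel matrix with the
variables of index `> n` replaced by `0`. -/
def subHankel (k : Type*) [CommSemiring k] (m n : ℕ) :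
    Matrix (Fin m) (Fin (m - 1)) (MvPolynomial (Fin n) k) :=
  fun i j => if h : i.1 + j.1 < n then X ⟨i.1 + j.1, h⟩ else 0

/-- The `m × (m-1)` semi-Hankel matrix in `n` variables: the generic Hankel matrix with the
variables of index `> n` replaced by the linear forms `ℓ`. -/
def semiHankel (k : Type*) [CommSemiring k] (m n : ℕ)
    (l : Fin (2 * (m - 1) - n) → MvPolynomial (Fin n) k) :
    Matrix (Fin m) (Fin (m - 1)) (MvPolynomial (Fin n) k) :=
  fun i j => if h : i.1 + j.1 < n then X ⟨i.1 + j.1, h⟩ else l ⟨i.1 + j.1 - n, by omega⟩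


lemma aux_poly_ne_zero {k : Type*} [Field k] {n : ℕ} (a : Fin n → k) (ha : a ≠ 0) :
    (∑ i : Fin n, Polynomial.C (a i) * Polynomial.X ^ (i : ℕ)) ≠ 0 := by
  intro h
  apply ha
  funext i0
  have h2 := congrArg (fun p => Polynomial.coeff p (i0 : ℕ)) h
  simp only [Polynomial.finset_sum_coeff, Polynomial.coeff_C_mul, Polynomial.coeff_X_pow,
    Polynomial.coeff_zero, mul_ite, mul_one, mul_zero] at h2
  rw [Finset.sum_eq_single i0] at h2
  · simpa using h2
  · intro b _ hb
    rw [if_neg fun h => hb (Fin.ext h.symm)]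
  · simp

theorem hankel_is_one_generic
    (k : Type*) [Field k] [Infinite k] (v w : ℕ) (hw : 1 ≤ w) (hvw : w ≤ v) :
    IsOneGeneric (hankelMatrix k v w) := by
  intro a ha b hb hS
  have key := congrArg (MvPolynomial.aeval (R := k)
      (fun s : Fin (v + w - 1) => (Polynomial.X : Polynomial k) ^ (s : ℕ))) hS
  simp only [map_sum, map_mul, aeval_C, aeval_X, hankelMatrix, map_zero,
    algebraMap_eq] at key
  have key2 : (∑ i : Fin v, Polynomial.C (a i) * Polynomial.X ^ (i : ℕ)) *
      (∑ j : Fin w, Polynomial.C (b j) * Polynomial.X ^ (j : ℕ)) = 0 := by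
    rw [Finset.sum_mul_sum]
    rw [← key]
    apply Finset.sum_congr rfl
    intro i _
    apply Finset.sum_congr rfl
    intro j _
    simp only [Polynomial.algebraMap_eq]
    ring
  rcases mul_eq_zero.mp key2 with h | h
  · exact aux_poly_ne_zero a ha h
  · exact aux_poly_ne_zero b hb h
end
end

section
/- Let Δ be the lower-rightmost t×t minor of the m×(m-1) r-leap catalecticant C and let [C]_t be the submatrix of the first t columns of C. Then for 2 ≤ t ≤ m-2, Δ does not belong to the ideal I_t([C]_t), because Δ has a monomial term involving the last variable X_{(m-1)r+(m-1)} while no t-minor of [C]_t involves it. -/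
open MvPolynomial

noncomputable section

namespace CatMinorAux

lemma prodX {k : Type*} [CommRing k] {n t : ℕ} (f : Fin t → Fin n) (s : Finset (Fin t)) :
    (∏ i ∈ s, (X (f i) : MvPolynomial (Fin n) k)) = monomial (∑ i ∈ s, Finsupp.single (f i) 1) 1 := by
  induction s using Finset.induction with
  | empty => simp
  | insert a s h ih =>
    rw [Finset.prod_insert h, Finset.sum_insert h, ih, X, monomial_mul, one_mul]

lemma coeff_detX {k : Type*} [CommRing k] {n t : ℕ} (v : Fin t → Fin t → Fin n)
    (e : Fin n →₀ ℕ) :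
    coeff e (Matrix.det (Matrix.of fun i j => (X (v i j) : MvPolynomial (Fin n) k))) =
      ∑ σ : Equiv.Perm (Fin t),
        if (∑ i, Finsupp.single (v (σ i) i) 1) = e then ((Equiv.Perm.sign σ : ℤ) : k) else 0 := by
  rw [Matrix.det_apply, coeff_sum]
  refine Finset.sum_congr rfl fun σ _ => ?_
  rw [Units.smul_def, coeff_smul]
  simp only [Matrix.of_apply]
  rw [prodX, coeff_monomial]
  by_cases h : (∑ i, Finsupp.single (v (σ i) i) 1) = e <;> simp [h]

lemma sumsingle_weight {n t : ℕ} (f : Fin t → Fin n) :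
    (∑ i : Fin t, Finsupp.single (f i) (1:ℕ)).sum (fun _ c => c) = t := by
  rw [← Finsupp.sum_finsetSum_index (fun _ => rfl) (fun _ _ _ => rfl)]
  simp [Finsupp.sum_single_index]

lemma sumsingle_apply {n t : ℕ} (f : Fin t → Fin n) (a : Fin n) :
    (∑ i : Fin t, Finsupp.single (f i) (1:ℕ)) a = ∑ i : Fin t, if f i = a then 1 else 0 := by
  rw [Finsupp.finset_sum_apply]
  simp [Finsupp.single_apply]

lemma perm_eq_one {t r : ℕ} (hr : 1 ≤ r) (σ : Equiv.Perm (Fin t))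
    (h : ∑ i : Fin t, ((σ i).1 * r + i.1)^2 = ∑ i : Fin t, (i.1 * (r+1))^2) : σ = 1 := by
  have hs : ∑ i : Fin t, ((σ i).1)^2 = ∑ i : Fin t, (i.1)^2 :=
    Equiv.sum_comp σ (fun i : Fin t => (i.1)^2)
  have hL : ∀ i : Fin t, ((σ i).1 * r + i.1)^2
      = ((σ i).1)^2 * r^2 + 2*r*((σ i).1 * i.1) + (i.1)^2 := fun i => by ring
  have hR : ∀ i : Fin t, (i.1 * (r+1))^2
      = (i.1)^2 * r^2 + 2*r*(i.1 * i.1) + (i.1)^2 := fun i => by ring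
  simp_rw [hL, hR, Finset.sum_add_distrib, ← Finset.sum_mul, ← Finset.mul_sum, hs] at h
  have h2 : (∑ i : Fin t, (σ i).1 * i.1) = ∑ i : Fin t, i.1 * i.1 :=
    Nat.eq_of_mul_eq_mul_left (by omega) (Nat.add_left_cancel (Nat.add_right_cancel h))
  have hsum : ∑ i : Fin t, 2 * ((σ i).1 * i.1) = ∑ i : Fin t, (((σ i).1)^2 + (i.1)^2) := by
    rw [← Finset.mul_sum, h2, Finset.sum_add_distrib, hs, Finset.mul_sum,
      ← Finset.sum_add_distrib]
    exact Finset.sum_congr rfl fun i _ => by ring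
  have hle : ∀ i ∈ Finset.univ, 2 * ((σ i).1 * i.1) ≤ ((σ i).1)^2 + (i.1)^2 := by
    intro i _
    have h1 := two_mul_le_add_sq ((σ i).1) (i.1)
    calc 2 * ((σ i).1 * i.1) = 2 * (σ i).1 * i.1 := by ring
      _ ≤ _ := h1
  have heq := (Finset.sum_eq_sum_iff_of_le hle).1 hsum
  refine Equiv.ext fun i => Fin.ext ?_
  have hz : ((σ i).1:ℤ)^2 + (i.1:ℤ)^2 = 2 * (((σ i).1:ℤ) * i.1) := by
    exact_mod_cast (heq i (Finset.mem_univ i)).symm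
  have h0 : (((σ i).1:ℤ) - i.1)^2 = 0 := by linear_combination hz
  have h1 : (((σ i).1:ℤ) - i.1) = 0 := pow_eq_zero_iff (by norm_num) |>.1 h0
  exact_mod_cast sub_eq_zero.1 h1

lemma coeff_support_exists {k : Type*} [CommRing k] {n t : ℕ} (v : Fin t → Fin t → Fin n)
    (e : Fin n →₀ ℕ)
    (h : coeff e (Matrix.det (Matrix.of fun i j => (X (v i j) : MvPolynomial (Fin n) k))) ≠ 0) :
    ∃ σ : Equiv.Perm (Fin t), e = ∑ i, Finsupp.single (v (σ i) i) 1 := by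
  rw [coeff_detX] at h
  obtain ⟨σ, -, hσ⟩ := Finset.exists_ne_zero_of_sum_ne_zero h
  by_cases hc : (∑ i, Finsupp.single (v (σ i) i) 1) = e
  · exact ⟨σ, hc.symm⟩
  · rw [if_neg hc] at hσ; exact absurd rfl hσ

lemma coeff_diag {k : Type*} [CommRing k] {n t r : ℕ} (hr : 1 ≤ r)
    (v : Fin t → Fin t → Fin n) (c0 : ℕ)
    (hval : ∀ a b : Fin t, (v a b).1 - c0 = a.1 * r + b.1) :
    coeff (∑ i, Finsupp.single (v i i) 1)
      (Matrix.det (Matrix.of fun i j => (X (v i j) : MvPolynomial (Fin n) k))) = 1 := by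
  rw [coeff_detX]
  rw [Finset.sum_eq_single (1 : Equiv.Perm (Fin t))]
  · simp
  · intro σ _ hσ
    have hne : ¬ ((∑ i, Finsupp.single (v (σ i) i) (1:ℕ)) = ∑ i, Finsupp.single (v i i) 1) := by
      intro hEq
      apply hσ
      apply perm_eq_one hr
      have hF : ∀ f : Fin t → Fin n,
          (∑ i : Fin t, Finsupp.single (f i) (1:ℕ)).sum (fun a c => c * ((a.1 - c0)^2))
            = ∑ i : Fin t, ((f i).1 - c0)^2 := by
        intro f
        rw [← Finsupp.sum_finsetSum_index (fun _ => by simp) (fun a x y => by ring)]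
        exact Finset.sum_congr rfl fun i _ => by
          rw [Finsupp.sum_single_index (by simp), one_mul]
      have hsq := congrArg (fun e : Fin n →₀ ℕ => e.sum (fun a c => c * ((a.1 - c0)^2))) hEq
      simp only [hF] at hsq
      calc ∑ i : Fin t, ((σ i).1 * r + i.1)^2
          = ∑ i : Fin t, ((v (σ i) i).1 - c0)^2 :=
            Finset.sum_congr rfl fun i _ => by rw [hval]
        _ = ∑ i : Fin t, ((v i i).1 - c0)^2 := hsq
        _ = ∑ i : Fin t, (i.1 * (r+1))^2 :=
            Finset.sum_congr rfl fun i _ => by rw [hval]; ring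
    rw [if_neg hne]
  · intro h; exact absurd (Finset.mem_univ 1) h

lemma span_coeff {k : Type*} [CommRing k] {n : ℕ} (S : Set (MvPolynomial (Fin n) k)) (t : ℕ)
    (NN : Fin n)
    (hS : ∀ g ∈ S, ∀ e : Fin n →₀ ℕ, coeff e g ≠ 0 → (e.sum fun _ c => c) = t ∧ e NN = 0)
    {x : MvPolynomial (Fin n) k} (hx : x ∈ Ideal.span S) (e : Fin n →₀ ℕ)
    (he : (e.sum fun _ c => c) < t ∨ ((e.sum fun _ c => c) = t ∧ e NN ≠ 0)) :
    coeff e x = 0 := by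
  refine Submodule.span_induction (p := fun x _ => ∀ e : Fin n →₀ ℕ,
      ((e.sum fun _ c => c) < t ∨ ((e.sum fun _ c => c) = t ∧ e NN ≠ 0)) → coeff e x = 0)
    ?_ ?_ ?_ ?_ hx e he
  · intro g hg e he
    by_contra hc
    obtain ⟨h1, h2⟩ := hS g hg e hc
    rcases he with h | ⟨-, h⟩
    · omega
    · exact h h2
  · intro e _; simp
  · intro a b _ _ ha hb e he
    rw [coeff_add, ha e he, hb e he, add_zero]
  · intro a x _ hx e he
    rw [smul_eq_mul, coeff_mul]
    apply Finset.sum_eq_zero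
    intro p hp
    rw [Finset.HasAntidiagonal.mem_antidiagonal] at hp
    have hw : (p.1 + p.2).sum (fun _ c => (c:ℕ)) = p.1.sum (fun _ c => c) + p.2.sum (fun _ c => c) :=
      Finsupp.sum_add_index' (fun _ => rfl) (fun _ _ _ => rfl)
    rw [hp] at hw
    by_cases h2 : p.2.sum (fun _ c => c) < t
    · rw [hx p.2 (Or.inl h2), mul_zero]
    · have het : (e.sum fun _ c => c) ≤ t := by rcases he with h | ⟨h, -⟩ <;> omega
      have h1 : p.1.sum (fun _ c => c) = 0 := by omega
      have hp1 : p.1 = 0 := by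
        ext a
        by_contra ha
        have hmem : a ∈ p.1.support := Finsupp.mem_support_iff.2 ha
        have hle : p.1 a ≤ p.1.sum (fun _ c => c) :=
          Finset.single_le_sum (f := fun b => p.1 b) (fun _ _ => Nat.zero_le _) hmem
        simp only [Finsupp.coe_zero, Pi.zero_apply] at *
        omega
      have hpe : p.2 = e := by rw [← hp, hp1, zero_add]
      rcases he with h | ⟨hA, hB⟩
      · omega
      · rw [hx p.2 (Or.inr ⟨by omega, by rw [hpe]; exact hB⟩), mul_zero]

end CatMinorAux

open CatMinorAux in
theorem catalecticant_corner_minor_not_in_column_submatrix_minors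
    (k : Type*) [Field k] [Infinite k] (m r t : ℕ) (hm : 4 ≤ m)
    (hr1 : 1 ≤ r) (hr2 : r ≤ m - 1) (ht1 : 2 ≤ t) (ht2 : t ≤ m - 2) :
    ((catMatrix k m r).submatrix
        (fun i : Fin t => (⟨m - t + i.1, by omega⟩ : Fin m))
        (fun j : Fin t => (⟨(m - 1) - t + j.1, by omega⟩ : Fin (m - 1)))).det ∉
      minorsIdeal
        ((catMatrix k m r).submatrix id
          (fun j : Fin t => (⟨j.1, by omega⟩ : Fin (m - 1)))) t := by
  intro hmem
  have hmul : (m-1)*(r+1) = (m-1)*r + (m-1) := by ring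
  have hvlt : ∀ a b : Fin t, (m - t + a.1) * r + (m - 1 - t + b.1) < (m-1)*(r+1) := by
    intro a b
    have ha := a.isLt; have hb := b.isLt
    have h1 : (m - t + a.1) * r ≤ (m-1) * r := Nat.mul_le_mul_right r (by omega)
    omega
  set v : Fin t → Fin t → Fin ((m-1)*(r+1)) :=
    fun a b => ⟨(m - t + a.1) * r + (m - 1 - t + b.1), hvlt a b⟩ with hvdef
  have hNlt : (m-1)*r + (m-2) < (m-1)*(r+1) := by omega
  set NN : Fin ((m-1)*(r+1)) := ⟨(m-1)*r + (m-2), hNlt⟩ with hNNdef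
  have hval : ∀ a b : Fin t, (v a b).1 - ((m-t)*r + (m-1-t)) = a.1 * r + b.1 := by
    intro a b
    have h1 : (m - t + a.1) * r = (m-t)*r + a.1*r := Nat.add_mul _ _ _
    show (m - t + a.1) * r + (m - 1 - t + b.1) - ((m-t)*r + (m-1-t)) = a.1*r + b.1
    omega
  have hdet : ((catMatrix k m r).submatrix
        (fun i : Fin t => (⟨m - t + i.1, by omega⟩ : Fin m))
        (fun j : Fin t => (⟨(m - 1) - t + j.1, by omega⟩ : Fin (m - 1)))).det
      = Matrix.det (Matrix.of fun i j => (X (v i j) : MvPolynomial (Fin ((m-1)*(r+1))) k)) := rfl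
  rw [hdet] at hmem
  have hgen : ∀ g ∈ { d | ∃ (ri : Fin t → Fin m) (ci : Fin t → Fin t),
      Function.Injective ri ∧ Function.Injective ci ∧
      d = (((catMatrix k m r).submatrix id
          (fun j : Fin t => (⟨j.1, by omega⟩ : Fin (m - 1)))).submatrix ri ci).det },
      ∀ e : Fin ((m-1)*(r+1)) →₀ ℕ, coeff e g ≠ 0 →
        (e.sum fun _ c => c) = t ∧ e NN = 0 := by
    rintro g ⟨ri, ci, -, -, rfl⟩ e hce
    have hwlt : ∀ i j : Fin t, (ri i).1 * r + (ci j).1 < (m-1)*(r+1) := by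
      intro i j
      have h1 := (ri i).isLt; have h2 := (ci j).isLt
      have h3 : (ri i).1 * r ≤ (m-1)*r := Nat.mul_le_mul_right r (by omega)
      omega
    have hg : (((catMatrix k m r).submatrix id
          (fun j : Fin t => (⟨j.1, by omega⟩ : Fin (m - 1)))).submatrix ri ci).det
        = Matrix.det (Matrix.of fun i j =>
            (X (⟨(ri i).1 * r + (ci j).1, hwlt i j⟩ : Fin ((m-1)*(r+1)))
              : MvPolynomial (Fin ((m-1)*(r+1))) k)) := rfl
    rw [hg] at hce
    obtain ⟨σ, hσ⟩ := coeff_support_exists _ _ hce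
    constructor
    · rw [hσ]; exact sumsingle_weight _
    · rw [hσ, sumsingle_apply]
      apply Finset.sum_eq_zero
      intro i _
      refine if_neg (fun hEq2 => ?_)
      have hv2 : (ri (σ i)).1 * r + (ci i).1 = (m-1)*r + (m-2) := congrArg Fin.val hEq2
      have h3 : (ri (σ i)).1 * r ≤ (m-1)*r := Nat.mul_le_mul_right r (by omega)
      have h4 := (ci i).isLt
      omega
  have hdN : (∑ i : Fin t, Finsupp.single (v i i) (1:ℕ)) NN ≠ 0 := by
    rw [sumsingle_apply]
    intro hz
    have hterm := Finset.sum_eq_zero_iff.1 hz ⟨t-1, by omega⟩ (Finset.mem_univ _)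
    have hvN : v ⟨t-1, by omega⟩ ⟨t-1, by omega⟩ = NN := by
      apply Fin.ext
      show (m - t + (t-1)) * r + (m - 1 - t + (t-1)) = (m-1)*r + (m-2)
      have e1 : m - t + (t-1) = m - 1 := by omega
      rw [e1]; omega
    rw [if_pos hvN] at hterm
    exact one_ne_zero hterm
  have h0 := span_coeff _ t NN hgen hmem (∑ i : Fin t, Finsupp.single (v i i) 1)
    (Or.inr ⟨sumsingle_weight _, hdN⟩)
  rw [coeff_diag hr1 v ((m-t)*r + (m-1-t)) hval] at h0
  exact one_ne_zero h0
end
end
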